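/- For a ≥ 2, |C_{2a−1}| = 2·|C_{2a−2}| and |R_{2a−1}| = 2·|R_{2a−2}|, where C_n = {i < 2^n : wt(i) ∈ {⌈n/2⌉−1, ⌈n/2⌉}} and R_n = {i < 2^n : wt(i) ∈ {⌈n/2⌉−2, ⌈n/2⌉−1, ⌈n/2⌉, ⌈n/2⌉+1}}. -/

import Mathlib

/-- Hamming weight of a natural number. -/
def wt (n : ℕ) : ℕ := (Nat.digits 2 n).sum

/-- `CFin n` = {i < 2^n : wt(i) ∈ {⌈n/2⌉-1, ⌈n/2⌉}} as a finset. -/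
def CFin (n : ℕ) : Finset ℕ :=
  (Finset.range (2 ^ n)).filter (fun i => wt i = (n + 1) / 2 - 1 ∨ wt i = (n + 1) / 2)

/-- `RFin n` = {i < 2^n : wt(i) ∈ {⌈n/2⌉-2, ⌈n/2⌉-1, ⌈n/2⌉, ⌈n/2⌉+1}} as a finset. -/
def RFin (n : ℕ) : Finset ℕ :=
  (Finset.range (2 ^ n)).filter (fun i =>
    wt i = (n + 1) / 2 - 2 ∨ wt i = (n + 1) / 2 - 1 ∨
    wt i = (n + 1) / 2 ∨ wt i = (n + 1) / 2 + 1)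

lemma wt_two_mul (n : ℕ) : wt (2 * n) = wt n := by
  rcases Nat.eq_zero_or_pos n with h | h
  · simp [h]
  · unfold wt
    rw [Nat.digits_def' (by norm_num) (by omega)]
    simp [Nat.mul_div_cancel_left _ (by norm_num : 0 < 2), Nat.mul_mod_right]

lemma wt_two_mul_add_one (n : ℕ) : wt (2 * n + 1) = wt n + 1 := by
  unfold wt
  rw [Nat.digits_def' (by norm_num) (by omega)]
  have h1 : (2 * n + 1) % 2 = 1 := by omega
  have h2 : (2 * n + 1) / 2 = n := by omega
  rw [h1, h2]; simp [Nat.add_comm]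

lemma wt_eq_card (i : ℕ) : wt i = i.bitIndices.toFinset.card := by
  induction i using Nat.binaryRec with
  | zero => simp [wt]
  | bit b n ih =>
    have hnd : n.bitIndices.Nodup := Nat.bitIndices_sorted.nodup
    cases b with
    | false =>
      rw [Nat.bit_false, Nat.bitIndices_two_mul, wt_two_mul, ih]
      rw [List.card_toFinset, List.card_toFinset, List.dedup_eq_self.2 hnd,
        List.dedup_eq_self.2 (hnd.map (fun a b => by omega)), List.length_map]
    | true =>
      rw [Nat.bit_true, Nat.bitIndices_two_mul_add_one, wt_two_mul_add_one, ih]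
      have hnd2 : (List.map (· + 1) n.bitIndices).Nodup := hnd.map (fun a b => by omega)
      rw [List.card_toFinset, List.card_toFinset, List.dedup_eq_self.2 hnd,
        List.dedup_eq_self.2 (by simp [hnd2] : (0 :: List.map (· + 1) n.bitIndices).Nodup)]
      simp [Nat.add_comm]

lemma lt_two_pow_iff' (n i : ℕ) : i < 2 ^ n ↔ i.bitIndices.toFinset ⊆ Finset.range n := by
  constructor
  · intro h x hx
    rw [List.mem_toFinset] at hx
    have := Nat.two_pow_le_of_mem_bitIndices hx
    rw [Finset.mem_range]
    by_contra hc
    have : 2 ^ n ≤ 2 ^ x := Nat.pow_le_pow_right (by norm_num) (by omega)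
    omega
  · intro h
    calc i = ∑ j ∈ i.bitIndices.toFinset, 2 ^ j :=
          (Finset.twoPowSum_toFinset_bitIndices i).symm
      _ ≤ ∑ j ∈ Finset.range n, 2 ^ j := Finset.sum_le_sum_of_subset h
      _ < 2 ^ n := by
          have hs : ∑ j ∈ Finset.range n, 2 ^ j = 2 ^ n - 1 := by
            simp [Nat.geomSum_eq (le_refl 2)]
          have hp : 0 < 2 ^ n := Nat.pow_pos (by norm_num)
          omega

lemma card_wt (n k : ℕ) :
    ((Finset.range (2 ^ n)).filter (fun i => wt i = k)).card = n.choose k := by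
  rw [show n.choose k = ((Finset.range n).powersetCard k).card by
    rw [Finset.card_powersetCard, Finset.card_range]]
  refine Finset.card_bij' (fun i _ => i.bitIndices.toFinset)
    (fun s _ => ∑ j ∈ s, 2 ^ j) ?_ ?_ ?_ ?_
  · intro i hi
    simp only [Finset.mem_filter, Finset.mem_range] at hi
    rw [Finset.mem_powersetCard]
    exact ⟨(lt_two_pow_iff' n i).1 hi.1, by rw [← wt_eq_card]; exact hi.2⟩
  · intro s hs
    rw [Finset.mem_powersetCard] at hs
    simp only [Finset.mem_filter, Finset.mem_range]
    constructor
    · rw [lt_two_pow_iff', Finset.toFinset_bitIndices_twoPowSum]; exact hs.1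
    · rw [wt_eq_card, Finset.toFinset_bitIndices_twoPowSum]; exact hs.2
  · intro i _; exact Finset.twoPowSum_toFinset_bitIndices i
  · intro s _; exact Finset.toFinset_bitIndices_twoPowSum s

lemma card_wt_mem (n : ℕ) (S : Finset ℕ) :
    ((Finset.range (2 ^ n)).filter (fun i => wt i ∈ S)).card = ∑ k ∈ S, n.choose k := by
  rw [Finset.card_eq_sum_card_fiberwise (f := wt) (t := S) (s := (Finset.range (2 ^ n)).filter (fun i => wt i ∈ S))
    (fun x hx => (Finset.mem_filter.1 hx).2)]
  apply Finset.sum_congr rfl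
  intro k hk
  rw [Finset.filter_filter, ← card_wt n k]
  congr 1
  apply Finset.filter_congr
  intro x _
  constructor
  · exact fun h => h.2
  · exact fun h => ⟨h ▸ hk, h⟩

lemma CFin_card (n : ℕ) :
    (CFin n).card = ∑ k ∈ ({(n + 1) / 2 - 1, (n + 1) / 2} : Finset ℕ), n.choose k := by
  rw [← card_wt_mem]
  unfold CFin
  congr 1
  apply Finset.filter_congr
  intro x _
  simp [Finset.mem_insert]

lemma RFin_card (n : ℕ) :
    (RFin n).card = ∑ k ∈ ({(n + 1) / 2 - 2, (n + 1) / 2 - 1, (n + 1) / 2,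
      (n + 1) / 2 + 1} : Finset ℕ), n.choose k := by
  rw [← card_wt_mem]
  unfold RFin
  congr 1
  apply Finset.filter_congr
  intro x _
  simp [Finset.mem_insert]

lemma pascal' (n k : ℕ) : (n + 1).choose (k + 1) = n.choose k + n.choose (k + 1) :=
  Nat.choose_succ_succ n k

theorem stmt5 (a : ℕ) (ha : 2 ≤ a) :
    (CFin (2 * a - 1)).card = 2 * (CFin (2 * a - 2)).card ∧
    (RFin (2 * a - 1)).card = 2 * (RFin (2 * a - 2)).card := by
  rcases Nat.lt_or_ge a 3 with h3 | h3
  · have ha2 : a = 2 := by omega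
    subst ha2
    rw [CFin_card, CFin_card, RFin_card, RFin_card]
    norm_num
  · obtain ⟨b, rfl⟩ : ∃ b, a = b + 3 := ⟨a - 3, by omega⟩
    have e1 : 2 * (b + 3) - 1 = 2 * b + 5 := by omega
    have e2 : 2 * (b + 3) - 2 = 2 * b + 4 := by omega
    rw [e1, e2, CFin_card, CFin_card, RFin_card, RFin_card]
    have d1 : (2 * b + 5 + 1) / 2 = b + 3 := by omega
    have d2 : (2 * b + 4 + 1) / 2 = b + 2 := by omega
    rw [d1, d2]
    have m1 : b + 3 - 1 = b + 2 := by omega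
    have m2 : b + 2 - 1 = b + 1 := by omega
    have m3 : b + 3 - 2 = b + 1 := by omega
    have m4 : b + 2 - 2 = b := by omega
    rw [m1, m2, m3, m4]
    have hC1 : ∑ k ∈ ({b + 2, b + 3} : Finset ℕ), (2 * b + 5).choose k
        = (2 * b + 5).choose (b + 2) + (2 * b + 5).choose (b + 3) :=
      Finset.sum_pair (by omega)
    have hC2 : ∑ k ∈ ({b + 1, b + 2} : Finset ℕ), (2 * b + 4).choose k
        = (2 * b + 4).choose (b + 1) + (2 * b + 4).choose (b + 2) :=
      Finset.sum_pair (by omega)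
    have hR1 : ∑ k ∈ ({b + 1, b + 2, b + 3, b + 4} : Finset ℕ), (2 * b + 5).choose k
        = (2 * b + 5).choose (b + 1) + ((2 * b + 5).choose (b + 2)
          + ((2 * b + 5).choose (b + 3) + (2 * b + 5).choose (b + 4))) := by
      rw [Finset.sum_insert (by simp only [Finset.mem_insert, Finset.mem_singleton]; omega),
        Finset.sum_insert (by simp only [Finset.mem_insert, Finset.mem_singleton]; omega),
        Finset.sum_pair (by omega)]
    have hR2 : ∑ k ∈ ({b, b + 1, b + 2, b + 3} : Finset ℕ), (2 * b + 4).choose k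
        = (2 * b + 4).choose b + ((2 * b + 4).choose (b + 1)
          + ((2 * b + 4).choose (b + 2) + (2 * b + 4).choose (b + 3))) := by
      rw [Finset.sum_insert (by simp only [Finset.mem_insert, Finset.mem_singleton]; omega),
        Finset.sum_insert (by simp only [Finset.mem_insert, Finset.mem_singleton]; omega),
        Finset.sum_pair (by omega)]
    rw [hC1, hC2, hR1, hR2]
    have p1 : (2 * b + 5).choose (b + 1)
        = (2 * b + 4).choose b + (2 * b + 4).choose (b + 1) := pascal' (2 * b + 4) b
    have p2 : (2 * b + 5).choose (b + 2)
        = (2 * b + 4).choose (b + 1) + (2 * b + 4).choose (b + 2) := pascal' (2 * b + 4) (b + 1)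
    have p3 : (2 * b + 5).choose (b + 3)
        = (2 * b + 4).choose (b + 2) + (2 * b + 4).choose (b + 3) := pascal' (2 * b + 4) (b + 2)
    have p4 : (2 * b + 5).choose (b + 4)
        = (2 * b + 4).choose (b + 3) + (2 * b + 4).choose (b + 4) := pascal' (2 * b + 4) (b + 3)
    have s1 : (2 * b + 4).choose (b + 3) = (2 * b + 4).choose (b + 1) := by
      rw [← Nat.choose_symm (show b + 1 ≤ 2 * b + 4 by omega)]
      congr 1
      omega
    have s2 : (2 * b + 4).choose (b + 4) = (2 * b + 4).choose b := by
      rw [← Nat.choose_symm (show b ≤ 2 * b + 4 by omega)]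
      congr 1
      omega
    omega
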